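/- arXiv:1610.00313 — 4 statements merged into one kernel-verified Lean document; each statement's English description precedes it below -/
import Mathlib

section
/- Let R ⊆ List (ℕ × Bool) be a recursively enumerable set of words. Then the set of words {w ∈ List (ℕ × Bool) | the element of PresentedGroup (FreeGroup.mk '' R) represented by w is the identity} is recursively enumerable. -/
/-- The `X`-torsion of a group `G`: elements `g` with `g ^ n = 1` for some `n ∈ X`. -/
def xTorsion (X : Set ℕ) (G : Type*) [Group G] : Set G := {g | ∃ n ∈ X, g ^ n = 1}

/-- A group is `X`-torsion-free if its `X`-torsion consists only of the identity. -/
def IsXTorsionFree (X : Set ℕ) (G : Type*) [Group G] : Prop := xTorsion X G = {1}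

/-- The set of orders (≥ 2) of torsion elements of `G`. -/
def torord (G : Type*) [Group G] : Set ℕ := {n | 2 ≤ n ∧ ∃ g : G, orderOf g = n}

/-- One step of the `X`-torsion annihilation: the normal closure of the set of elements
whose image in `G ⧸ N` is `X`-torsion (i.e. `g ^ n ∈ N` for some `n ∈ X`). -/
def torStep (X : Set ℕ) {G : Type*} [Group G] (N : Subgroup G) : Subgroup G :=
  Subgroup.normalClosure {g : G | ∃ n ∈ X, g ^ n ∈ N}

/-- `torX X G n` is `tor^X_n(G)`. -/
def torX (X : Set ℕ) (G : Type*) [Group G] : ℕ → Subgroup G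
  | 0 => ⊥
  | n + 1 => torStep X (torX X G n)

lemma torStep_mono (X : Set ℕ) {G : Type*} [Group G] {N M : Subgroup G} (h : N ≤ M) :
    torStep X N ≤ torStep X M :=
  Subgroup.normalClosure_mono (fun g hg => by
    obtain ⟨n, hn, hgn⟩ := hg; exact ⟨n, hn, h hgn⟩)

lemma torX_le_succ (X : Set ℕ) (G : Type*) [Group G] (n : ℕ) :
    torX X G n ≤ torX X G (n + 1) := by
  induction n with
  | zero => exact bot_le
  | succ n ih => exact torStep_mono X ih

lemma torX_mono (X : Set ℕ) (G : Type*) [Group G] : Monotone (torX X G) :=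
  monotone_nat_of_le_succ (torX_le_succ X G)

/-- `tor^X_ω(G) = ⋃_n tor^X_n(G)`, as a subgroup of `G`. -/
def torOmega (X : Set ℕ) (G : Type*) [Group G] : Subgroup G where
  carrier := ⋃ n, (torX X G n : Set G)
  one_mem' := Set.mem_iUnion.mpr ⟨0, Subgroup.one_mem _⟩
  mul_mem' := by
    intro a b ha hb
    obtain ⟨m, hm⟩ := Set.mem_iUnion.mp ha
    obtain ⟨n, hn⟩ := Set.mem_iUnion.mp hb
    exact Set.mem_iUnion.mpr ⟨max m n, Subgroup.mul_mem _
      (torX_mono X G (le_max_left m n) hm) (torX_mono X G (le_max_right m n) hn)⟩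
  inv_mem' := by
    intro a ha
    obtain ⟨m, hm⟩ := Set.mem_iUnion.mp ha
    exact Set.mem_iUnion.mpr ⟨m, Subgroup.inv_mem _ hm⟩

instance torX_normal (X : Set ℕ) (G : Type*) [Group G] (n : ℕ) : (torX X G n).Normal := by
  cases n with
  | zero => exact inferInstanceAs (⊥ : Subgroup G).Normal
  | succ n => exact inferInstanceAs (Subgroup.normalClosure _).Normal

instance torOmega_normal (X : Set ℕ) (G : Type*) [Group G] : (torOmega X G).Normal := by
  constructor
  intro a ha g
  obtain ⟨m, hm⟩ := Set.mem_iUnion.mp ha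
  exact Set.mem_iUnion.mpr ⟨m, (torX_normal X G m).conj_mem a hm g⟩

/-- A predicate on a primcodable type is recursively enumerable if it is the domain of a
partial computable function. -/
def REPredicate {α : Type*} [Primcodable α] (p : α → Prop) : Prop :=
  Partrec (fun a => Part.assert (p a) (fun _ => Part.some ()))

/-- A group is finitely presented if it is isomorphic to the group of a finite presentation. -/
def IsFinitelyPresented (G : Type*) [Group G] : Prop :=
  ∃ (n : ℕ) (rels : Set (FreeGroup (Fin n))), rels.Finite ∧ Nonempty (G ≃* PresentedGroup rels)


open Nat.Partrec (Code)
open Nat.Partrec.Code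

namespace WordProblemRe

abbrev Wd := List (ℕ × Bool)
abbrev Tr := Wd × Wd × Bool

/-- The free-group element represented by one conjugate datum. -/
def elemOf (e : Tr) : FreeGroup ℕ :=
  FreeGroup.mk e.1 * (cond e.2.2 (FreeGroup.mk e.2.1) (FreeGroup.mk e.2.1)⁻¹) *
    (FreeGroup.mk e.1)⁻¹

/-- The word representing one conjugate datum. -/
def convWord (e : Tr) : Wd :=
  e.1 ++ (cond e.2.2 e.2.1 (FreeGroup.invRev e.2.1)) ++ FreeGroup.invRev e.1

def exprWord (L : List Tr) : Wd := (L.map convWord).flatten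

lemma mk_convWord (e : Tr) : FreeGroup.mk (convWord e) = elemOf e := by
  obtain ⟨c, r, b⟩ := e
  cases b <;>
    simp [convWord, elemOf, ← FreeGroup.mul_mk, FreeGroup.inv_mk, mul_assoc]

lemma mk_exprWord (L : List Tr) :
    FreeGroup.mk (exprWord L) = (L.map elemOf).prod := by
  induction L with
  | nil => simp [exprWord]; rfl
  | cons e L ih =>
    have : exprWord (e :: L) = convWord e ++ exprWord L := by
      simp [exprWord]
    rw [this, ← FreeGroup.mul_mk, mk_convWord, ih, List.map_cons, List.prod_cons]

lemma mk_eq_iff_reduce {a b : Wd} :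
    (FreeGroup.mk a : FreeGroup ℕ) = FreeGroup.mk b ↔
      FreeGroup.reduce a = FreeGroup.reduce b := by
  rw [← FreeGroup.toWord_inj, FreeGroup.toWord_mk, FreeGroup.toWord_mk]

def invTr (e : Tr) : Tr := (e.1, e.2.1, !e.2.2)

lemma elemOf_invTr (e : Tr) : elemOf (invTr e) = (elemOf e)⁻¹ := by
  obtain ⟨c, r, b⟩ := e
  cases b <;>
    simp only [invTr, elemOf, Bool.not_false, Bool.not_true, Bool.cond_false, Bool.cond_true] <;>
    group

/-- Main characterization: a word maps to 1 in the presented group iff there is a list of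
conjugacy data with relators from `R` whose product reduces to the same word. -/
lemma main_iff (R : Set Wd) (w : Wd) :
    FreeGroup.mk w ∈ Subgroup.normalClosure (FreeGroup.mk '' R) ↔
      ∃ L : List Tr, (∀ e ∈ L, e.2.1 ∈ R) ∧
        FreeGroup.reduce (exprWord L) = FreeGroup.reduce w := by
  constructor
  · intro h
    have h' : ∃ L : List Tr, (∀ e ∈ L, e.2.1 ∈ R) ∧
        (L.map elemOf).prod = FreeGroup.mk w := by
      refine Subgroup.closure_induction
        (p := fun x _ => ∃ L : List Tr, (∀ e ∈ L, e.2.1 ∈ R) ∧ (L.map elemOf).prod = x)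
        ?_ ?_ ?_ ?_ h
      · intro x hx
        rcases Group.mem_conjugatesOfSet_iff.1 hx with ⟨a, ha, hconj⟩
        rcases ha with ⟨r, hr, rfl⟩
        rcases isConj_iff.1 hconj with ⟨c, rfl⟩
        refine ⟨[(c.toWord, r, true)], ?_, ?_⟩
        · simpa using hr
        · simp [elemOf, FreeGroup.mk_toWord]
      · exact ⟨[], by simp, by simp⟩
      · rintro x y _ _ ⟨L₁, h₁, rfl⟩ ⟨L₂, h₂, rfl⟩
        refine ⟨L₁ ++ L₂, ?_, by simp⟩
        intro e he; rcases List.mem_append.1 he with h | h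
        exacts [h₁ e h, h₂ e h]
      · rintro x _ ⟨L, hL, rfl⟩
        refine ⟨L.reverse.map invTr, ?_, ?_⟩
        · intro e he
          rcases List.mem_map.1 he with ⟨e', he', rfl⟩
          exact hL e' (List.mem_reverse.1 he')
        · rw [List.map_map]
          have : (elemOf ∘ invTr) = fun e => (elemOf e)⁻¹ := funext elemOf_invTr
          rw [this, List.prod_inv_reverse]
          simp only [List.map_map, ← List.map_reverse]
          rfl
    rcases h' with ⟨L, hL, hprod⟩
    exact ⟨L, hL, mk_eq_iff_reduce.1 ((mk_exprWord L).trans hprod)⟩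
  · rintro ⟨L, hL, hred⟩
    have : FreeGroup.mk w = (L.map elemOf).prod :=
      ((mk_eq_iff_reduce.2 hred).symm).trans (mk_exprWord L)
    rw [this]
    refine Subgroup.list_prod_mem _ ?_
    intro x hx
    rcases List.mem_map.1 hx with ⟨e, he, rfl⟩
    have hr : FreeGroup.mk e.2.1 ∈ Subgroup.normalClosure (FreeGroup.mk '' R) :=
      Subgroup.subset_normalClosure ⟨e.2.1, hL e he, rfl⟩
    have hpow : (cond e.2.2 (FreeGroup.mk e.2.1) (FreeGroup.mk e.2.1)⁻¹) ∈
        Subgroup.normalClosure (FreeGroup.mk '' R) := by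
      cases e.2.2
      · exact Subgroup.inv_mem _ hr
      · exact hr
    simpa [elemOf, mul_assoc] using
      (Subgroup.normalClosure_normal (s := FreeGroup.mk '' R)).conj_mem _ hpow (FreeGroup.mk e.1)


/-! ### Computability of `FreeGroup.reduce` and the expression word -/

def redStep (p : (ℕ × Bool) × Wd) : Wd :=
  cond ((p.2.head?.map fun hd => decide (p.1.1 = hd.1) && decide (p.1.2 = !hd.2)).getD false)
    p.2.tail (p.1 :: p.2)

lemma reduce_eq_foldr (L : Wd) :
    FreeGroup.reduce L = L.foldr (fun a s => redStep (a, s)) [] := by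
  induction L with
  | nil => rfl
  | cons x L ih =>
    rw [FreeGroup.reduce.cons, ih, List.foldr_cons]
    cases h : L.foldr (fun a s => redStep (a, s)) [] with
    | nil => rfl
    | cons hd tl =>
      show (if x.1 = hd.1 ∧ x.2 = !hd.2 then tl else x :: hd :: tl) = redStep (x, hd :: tl)
      by_cases h1 : x.1 = hd.1 <;> by_cases h2 : x.2 = !hd.2 <;>
        simp [redStep, h1, h2]

lemma primrec_redStep : Primrec redStep := by
  have hcond : Primrec fun p : (ℕ × Bool) × Wd =>
      (p.2.head?.map fun hd => decide (p.1.1 = hd.1) && decide (p.1.2 = !hd.2)).getD false := by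
    refine Primrec.option_getD.comp ?_ (Primrec.const false)
    refine Primrec.option_map (Primrec.list_head?.comp Primrec.snd) ?_
    refine Primrec₂.comp Primrec.and ?_ ?_
    · exact PrimrecPred.decide (Primrec.eq.comp (Primrec.fst.comp (Primrec.fst.comp Primrec.fst))
        (Primrec.fst.comp Primrec.snd))
    · exact PrimrecPred.decide (Primrec.eq.comp (Primrec.snd.comp (Primrec.fst.comp Primrec.fst))
        ((Primrec.dom_bool not).comp (Primrec.snd.comp Primrec.snd)))
  exact Primrec.cond hcond (Primrec.list_tail.comp Primrec.snd)
    (Primrec.list_cons.comp Primrec.fst Primrec.snd)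

lemma primrec_reduce : Primrec (FreeGroup.reduce : Wd → Wd) :=
  (Primrec.list_foldr Primrec.id (Primrec.const [])
    ((primrec_redStep.comp Primrec.snd).to₂)).of_eq fun L => (reduce_eq_foldr L).symm

lemma primrec_invRev : Primrec (FreeGroup.invRev : Wd → Wd) := by
  have : Primrec fun w : Wd => (w.map fun g => (g.1, !g.2)).reverse :=
    Primrec.list_reverse.comp (Primrec.list_map Primrec.id
      ((Primrec.pair (Primrec.fst.comp Primrec.snd)
        ((Primrec.dom_bool not).comp (Primrec.snd.comp Primrec.snd))).to₂ :
          Primrec₂ fun (_ : Wd) (g : ℕ × Bool) => (g.1, !g.2)))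
  exact this.of_eq fun w => by simp [FreeGroup.invRev]

lemma primrec_convWord : Primrec convWord := by
  refine Primrec.list_append.comp (Primrec.list_append.comp Primrec.fst ?_)
    (primrec_invRev.comp Primrec.fst)
  exact Primrec.cond (Primrec.snd.comp Primrec.snd) (Primrec.fst.comp Primrec.snd)
    (primrec_invRev.comp (Primrec.fst.comp Primrec.snd))

lemma primrec_exprWord : Primrec exprWord :=
  Primrec.list_flatten.comp (Primrec.list_map Primrec.id
    (primrec_convWord.comp Primrec.snd).to₂)


/-! ### r.e. predicates are closed under existential quantification -/

lemma rePred_exists {α β : Type*} [Primcodable α] [Primcodable β] {q : α × β → Prop}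
    (hq : REPred q) : REPred fun a => ∃ b, q (a, b) := by
  obtain ⟨c, hc⟩ := Nat.Partrec.Code.exists_code.1 hq
  have key : ∀ p : α × β, (Nat.Partrec.Code.eval c (Encodable.encode p)).Dom ↔ q p := by
    intro p
    rw [hc]
    simp [Part.assert, Encodable.encodek]
  set h : α → ℕ → Option Unit := fun a k =>
    (Encodable.decode (α := β) k.unpair.1).bind fun b =>
      (Nat.Partrec.Code.evaln k.unpair.2 c (Encodable.encode (a, b))).map fun _ => () with hdef
  have hh : Computable₂ h := by
    have hdec : Primrec fun p : α × ℕ => (Encodable.decode (α := β) p.2.unpair.1) :=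
      Primrec.decode.comp (Primrec.fst.comp (Primrec.unpair.comp Primrec.snd))
    have heval : Primrec fun p : (α × ℕ) × β =>
        Nat.Partrec.Code.evaln p.1.2.unpair.2 c (Encodable.encode (p.1.1, p.2)) := by
      have hargs : Primrec fun p : (α × ℕ) × β =>
          ((p.1.2.unpair.2, c), Encodable.encode (p.1.1, p.2)) :=
        Primrec.pair (Primrec.pair
          (Primrec.snd.comp (Primrec.unpair.comp (Primrec.snd.comp Primrec.fst)))
          (Primrec.const c))
          (Primrec.encode.comp (Primrec.pair (Primrec.fst.comp Primrec.fst) Primrec.snd))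
      exact Nat.Partrec.Code.primrec_evaln.comp hargs
    have hg : Primrec₂ fun (p : α × ℕ) (b : β) =>
        (Nat.Partrec.Code.evaln p.2.unpair.2 c (Encodable.encode (p.1, b))).map
          fun _ => () := Primrec.option_map heval ((Primrec.const ()).comp₂ Primrec₂.right)
    have : Primrec₂ h := Primrec.option_bind hdec hg
    exact this.to_comp
  have hp : Partrec fun a => Nat.rfindOpt (h a) := Partrec.rfindOpt hh
  refine (hp.dom_re).of_eq fun a => ?_
  rw [Nat.rfindOpt_dom]
  constructor
  · rintro ⟨n, x, hx⟩
    simp only [hdef, Option.mem_def, Option.bind_eq_some_iff, Option.map_eq_some_iff] at hx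
    obtain ⟨b, hb, y, hy, -⟩ := hx
    have : y ∈ Nat.Partrec.Code.eval c (Encodable.encode (a, b)) :=
      Nat.Partrec.Code.evaln_sound hy
    exact ⟨b, (key (a, b)).1 (Part.dom_iff_mem.2 ⟨y, this⟩)⟩
  · rintro ⟨b, hb⟩
    have : (Nat.Partrec.Code.eval c (Encodable.encode (a, b))).Dom := (key (a, b)).2 hb
    obtain ⟨y, hy⟩ := Part.dom_iff_mem.1 this
    obtain ⟨k, hk⟩ := Nat.Partrec.Code.evaln_complete.1 hy
    refine ⟨Nat.pair (Encodable.encode b) k, (), ?_⟩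
    simp only [hdef, Option.mem_def, Nat.unpair_pair, Encodable.encodek, Option.bind_some,
      Option.map_eq_some_iff]
    exact ⟨y, by simpa [Option.mem_def] using hk, trivial⟩

/-! ### The verifier -/

def checkP (c : Nat.Partrec.Code) (p : Wd × (List Tr × ℕ)) : Bool :=
  decide (FreeGroup.reduce (exprWord p.2.1) = FreeGroup.reduce p.1) &&
    p.2.1.foldr
      (fun e s => (Nat.Partrec.Code.evaln p.2.2 c (Encodable.encode e.2.1)).isSome && s) true

lemma primrec_checkP (c : Nat.Partrec.Code) : Primrec (checkP c) := by
  have h1 : Primrec fun p : Wd × (List Tr × ℕ) =>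
      decide (FreeGroup.reduce (exprWord p.2.1) = FreeGroup.reduce p.1) :=
    PrimrecPred.decide (Primrec.eq.comp (primrec_reduce.comp (primrec_exprWord.comp (Primrec.fst.comp Primrec.snd)))
      (primrec_reduce.comp Primrec.fst))
  have heval : Primrec fun x : (Wd × (List Tr × ℕ)) × (Tr × Bool) =>
      Nat.Partrec.Code.evaln x.1.2.2 c (Encodable.encode x.2.1.2.1) := by
    have hargs : Primrec fun x : (Wd × (List Tr × ℕ)) × (Tr × Bool) =>
        ((x.1.2.2, c), Encodable.encode x.2.1.2.1) :=
      Primrec.pair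
        (Primrec.pair (Primrec.snd.comp (Primrec.snd.comp Primrec.fst)) (Primrec.const c))
        (Primrec.encode.comp
          (Primrec.fst.comp (Primrec.snd.comp (Primrec.fst.comp Primrec.snd))))
    exact Nat.Partrec.Code.primrec_evaln.comp hargs
  have h2 : Primrec fun p : Wd × (List Tr × ℕ) =>
      p.2.1.foldr
        (fun e s => (Nat.Partrec.Code.evaln p.2.2 c (Encodable.encode e.2.1)).isSome && s)
        true := by
    have hstep : Primrec₂ fun (p : Wd × (List Tr × ℕ)) (q : Tr × Bool) =>
        (Nat.Partrec.Code.evaln p.2.2 c (Encodable.encode q.1.2.1)).isSome && q.2 :=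
      (Primrec.and.comp (Primrec.option_isSome.comp heval)
        (Primrec.snd.comp Primrec.snd)).to₂
    exact (Primrec.list_foldr (Primrec.fst.comp Primrec.snd) (Primrec.const true)
      hstep).of_eq fun p => rfl
  exact Primrec.and.comp h1 h2

lemma foldr_all_iff (f : Tr → Bool) (L : List Tr) :
    L.foldr (fun e s => f e && s) true = true ↔ ∀ e ∈ L, f e = true := by
  induction L with
  | nil => simp
  | cons e L ih => simp [ih]

lemma checkP_iff (c : Nat.Partrec.Code) (p : Wd × (List Tr × ℕ)) :
    checkP c p = true ↔
      FreeGroup.reduce (exprWord p.2.1) = FreeGroup.reduce p.1 ∧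
        ∀ e ∈ p.2.1, (Nat.Partrec.Code.evaln p.2.2 c (Encodable.encode e.2.1)).isSome := by
  rw [checkP, Bool.and_eq_true, decide_eq_true_eq,
    foldr_all_iff (fun e => (Nat.Partrec.Code.evaln p.2.2 c (Encodable.encode e.2.1)).isSome)]

lemma isSome_evaln_mono {c : Nat.Partrec.Code} {k k' n : ℕ} (h : k ≤ k')
    (hs : (Nat.Partrec.Code.evaln k c n).isSome) :
    (Nat.Partrec.Code.evaln k' c n).isSome := by
  obtain ⟨y, hy⟩ := Option.isSome_iff_exists.1 hs
  exact Option.isSome_iff_exists.2 ⟨y, Nat.Partrec.Code.evaln_mono h hy⟩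

lemma exists_uniform_fuel (c : Nat.Partrec.Code) (L : List Tr)
    (h : ∀ e ∈ L, ∃ k, (Nat.Partrec.Code.evaln k c (Encodable.encode e.2.1)).isSome) :
    ∃ k, ∀ e ∈ L, (Nat.Partrec.Code.evaln k c (Encodable.encode e.2.1)).isSome := by
  induction L with
  | nil => exact ⟨0, by simp⟩
  | cons e L ih =>
    obtain ⟨k₁, hk₁⟩ := h e (List.mem_cons_self (a := e) (l := L))
    obtain ⟨k₂, hk₂⟩ := ih fun e' he' => h e' (List.mem_cons_of_mem _ he')
    refine ⟨max k₁ k₂, ?_⟩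
    intro e' he'
    rcases List.mem_cons.1 he' with rfl | he'
    · exact isSome_evaln_mono (le_max_left _ _) hk₁
    · exact isSome_evaln_mono (le_max_right _ _) (hk₂ e' he')

end WordProblemRe

open WordProblemRe in
theorem wordProblem_re (R : Set (List (ℕ × Bool))) (hR : REPredicate (· ∈ R)) :
    REPredicate (fun w : List (ℕ × Bool) =>
      PresentedGroup.mk (FreeGroup.mk '' R) (FreeGroup.mk w) = 1) := by
  obtain ⟨c, hc⟩ := Nat.Partrec.Code.exists_code.1 hR
  have keyR : ∀ x : Wd,
      x ∈ R ↔ ∃ k, (Nat.Partrec.Code.evaln k c (Encodable.encode x)).isSome := by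
    intro x
    have hdom : (Nat.Partrec.Code.eval c (Encodable.encode x)).Dom ↔ x ∈ R := by
      rw [hc]; simp [Part.assert, Encodable.encodek]
    rw [← hdom]
    constructor
    · intro h
      obtain ⟨y, hy⟩ := Part.dom_iff_mem.1 h
      obtain ⟨k, hk⟩ := Nat.Partrec.Code.evaln_complete.1 hy
      exact ⟨k, Option.isSome_iff_exists.2 ⟨y, hk⟩⟩
    · rintro ⟨k, hk⟩
      obtain ⟨y, hy⟩ := Option.isSome_iff_exists.1 hk
      exact Part.dom_iff_mem.2 ⟨y, Nat.Partrec.Code.evaln_sound hy⟩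
  have hcp : ComputablePred fun p : Wd × (List Tr × ℕ) => checkP c p = true :=
    ⟨fun p => instDecidableEqBool _ _,
      (primrec_checkP c).to_comp.of_eq fun p => by cases h : checkP c p <;> simp [h]⟩
  have hex := rePred_exists hcp.to_re
  refine REPred.of_eq hex fun w => ?_
  rw [show (PresentedGroup.mk (FreeGroup.mk '' R) (FreeGroup.mk w) = 1) ↔
      FreeGroup.mk w ∈ Subgroup.normalClosure (FreeGroup.mk '' R) from
    QuotientGroup.eq_one_iff _, main_iff R w]
  constructor
  · rintro ⟨⟨L, k⟩, h⟩
    rw [checkP_iff] at h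
    exact ⟨L, fun e he => (keyR _).2 ⟨k, h.2 e he⟩, h.1⟩
  · rintro ⟨L, hL, hred⟩
    obtain ⟨k, hk⟩ := exists_uniform_fuel c L fun e he => (keyR _).1 (hL e he)
    exact ⟨(L, k), (checkP_iff c (w, (L, k))).2 ⟨hred, hk⟩⟩
end

section
/- Let R ⊆ List (ℕ × Bool) be a recursively enumerable set of words and let A ⊆ ℕ be recursively enumerable. Then the set of words {w ∈ List (ℕ × Bool) | the element of PresentedGroup (FreeGroup.mk '' R) represented by w lies in tor^A(PresentedGroup (FreeGroup.mk '' R))} is recursively enumerable. -/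
/-! ### Auxiliary material for `xTorsion_words_re` -/

section Aux

open Nat.Partrec (Code) in
open Nat.Partrec.Code in
lemma aux_REPred_exists {α : Type*} [Primcodable α] {p : α → Prop} (h : REPredicate p) :
    ∃ q : α → ℕ → Bool, Primrec₂ q ∧
      (∀ a k l, k ≤ l → q a k = true → q a l = true) ∧ (∀ a, p a ↔ ∃ k, q a k = true) := by
  obtain ⟨c, hc⟩ := Code.exists_code.1 h
  refine ⟨fun a k => (evaln k c (Encodable.encode a)).isSome, ?_, ?_, ?_⟩
  · have := primrec_evaln.comp ((Primrec.pair (Primrec.pair Primrec.snd (Primrec.const c))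
      (Primrec.encode.comp Primrec.fst)) :
        Primrec fun x : α × ℕ => ((x.2, c), Encodable.encode x.1))
    exact (Primrec.option_isSome.comp this).to₂
  · intro a k l hkl hk
    rw [Option.isSome_iff_exists] at hk ⊢
    obtain ⟨x, hx⟩ := hk
    exact ⟨x, evaln_mono hkl hx⟩
  · intro a
    have hdom : p a ↔ (Nat.Partrec.Code.eval c (Encodable.encode a)).Dom := by
      rw [hc]
      simp [Encodable.encodek, Part.assert]
    rw [hdom, Part.dom_iff_mem]
    constructor
    · rintro ⟨x, hx⟩
      obtain ⟨k, hk⟩ := evaln_complete.1 hx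
      exact ⟨k, by simp [Option.isSome_iff_exists]; exact ⟨x, hk⟩⟩
    · rintro ⟨k, hk⟩
      rw [Option.isSome_iff_exists] at hk
      obtain ⟨x, hx⟩ := hk
      exact ⟨x, evaln_complete.2 ⟨k, hx⟩⟩

lemma aux_REPred_of_sigma {α : Type*} [Primcodable α] {p : α → Prop} (q : α → ℕ → Bool)
    (hq : Primrec₂ q) (hpq : ∀ a, p a ↔ ∃ k, q a k = true) : REPredicate p := by
  have h1 : Partrec fun a => Nat.rfind (fun k => Part.some (q a k)) :=
    Partrec.rfind ((hq.to_comp).partrec₂)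
  have h2 := h1.map ((Computable.const ()).comp Computable.fst).to₂
  refine h2.of_eq fun a => Part.ext fun u => ?_
  cases u
  simp only [Part.mem_assert_iff, Part.mem_some_iff, Part.mem_map_iff, exists_and_right]
  constructor
  · rintro ⟨⟨n, hn⟩, _⟩
    have := Nat.rfind_spec hn
    exact ⟨(hpq a).2 ⟨n, by simpa using this⟩, trivial⟩
  · rintro ⟨hpa, _⟩
    have : (Nat.rfind (fun k => Part.some (q a k))).Dom := by
      refine Nat.rfind_dom.2 ?_
      obtain ⟨k, hk⟩ := (hpq a).1 hpa
      exact ⟨k, by simpa using hk, fun _ => trivial⟩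
    exact ⟨⟨_, Part.get_mem this⟩, trivial⟩

abbrev Wd := List (ℕ × Bool)

/-- Word representing `g * r^±1 * g⁻¹`. -/
def conjWord (t : Wd × Wd × Bool) : Wd :=
  t.2.1 ++ (bif t.2.2 then t.1 else FreeGroup.invRev t.1) ++ FreeGroup.invRev t.2.1

def bigWord (L : List (Wd × Wd × Bool)) : Wd := (L.map conjWord).flatten

lemma mk_conjWord (t : Wd × Wd × Bool) :
    FreeGroup.mk (conjWord t) =
      FreeGroup.mk t.2.1 * (bif t.2.2 then FreeGroup.mk t.1 else (FreeGroup.mk t.1)⁻¹) *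
        (FreeGroup.mk t.2.1)⁻¹ := by
  obtain ⟨r, g, b⟩ := t
  cases b <;> simp [conjWord, ← FreeGroup.mul_mk, FreeGroup.inv_mk, mul_assoc]

lemma bigWord_cons (t : Wd × Wd × Bool) (L : List (Wd × Wd × Bool)) :
    FreeGroup.mk (bigWord (t :: L)) = FreeGroup.mk (conjWord t) * FreeGroup.mk (bigWord L) := by
  simp [bigWord, ← FreeGroup.mul_mk]

lemma bigWord_nil : FreeGroup.mk (bigWord []) = 1 := by
  simp [bigWord, ← FreeGroup.one_eq_mk]

lemma bigWord_append (L₁ L₂ : List (Wd × Wd × Bool)) :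
    FreeGroup.mk (bigWord (L₁ ++ L₂)) = FreeGroup.mk (bigWord L₁) * FreeGroup.mk (bigWord L₂) := by
  simp [bigWord, ← FreeGroup.mul_mk]

lemma mk_conjWord_flip (t : Wd × Wd × Bool) :
    FreeGroup.mk (conjWord (t.1, t.2.1, !t.2.2)) = (FreeGroup.mk (conjWord t))⁻¹ := by
  obtain ⟨r, g, b⟩ := t
  cases b <;>
    simp only [mk_conjWord, Bool.not_false, Bool.not_true, cond_true, cond_false, mul_inv_rev,
      inv_inv, mul_assoc]

lemma bigWord_rev (L : List (Wd × Wd × Bool)) :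
    FreeGroup.mk (bigWord (L.reverse.map fun t => (t.1, t.2.1, !t.2.2))) =
      (FreeGroup.mk (bigWord L))⁻¹ := by
  induction L with
  | nil => simp [bigWord_nil]
  | cons t L ih =>
    simp only [List.reverse_cons, List.map_append, List.map_cons, List.map_nil, bigWord_append,
      bigWord_cons, bigWord_nil, ih, mk_conjWord_flip, mul_one, mul_inv_rev]

lemma mem_normalClosure_iff (R : Set Wd) (x : FreeGroup ℕ) :
    x ∈ Subgroup.normalClosure (FreeGroup.mk '' R) ↔
      ∃ L : List (Wd × Wd × Bool), (∀ t ∈ L, t.1 ∈ R) ∧ FreeGroup.mk (bigWord L) = x := by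
  constructor
  · intro hx
    refine Subgroup.closure_induction (fun y hy => ?_) ?_ (fun y z _ _ hy hz => ?_)
      (fun y _ hy => ?_) hx
    · obtain ⟨a, ⟨r, hrR, rfl⟩, hconj⟩ := Group.mem_conjugatesOfSet_iff.1 hy
      obtain ⟨g, rfl⟩ := isConj_iff.1 hconj
      refine ⟨[(r, g.toWord, true)], by simpa using hrR, ?_⟩
      rw [bigWord_cons, mk_conjWord, bigWord_nil]
      simp [FreeGroup.mk_toWord]
    · exact ⟨[], by simp, bigWord_nil⟩
    · obtain ⟨L₁, h₁, rfl⟩ := hy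
      obtain ⟨L₂, h₂, rfl⟩ := hz
      refine ⟨L₁ ++ L₂, ?_, bigWord_append L₁ L₂⟩
      intro t ht; rcases List.mem_append.1 ht with h | h
      exacts [h₁ t h, h₂ t h]
    · obtain ⟨L, hL, rfl⟩ := hy
      refine ⟨L.reverse.map fun t => (t.1, t.2.1, !t.2.2), ?_, bigWord_rev L⟩
      intro t ht
      simp only [List.mem_map, List.mem_reverse] at ht
      obtain ⟨s, hs, rfl⟩ := ht
      exact hL s hs
  · rintro ⟨L, hL, rfl⟩
    induction L with
    | nil => rw [bigWord_nil]; exact Subgroup.one_mem _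
    | cons t L ih =>
      rw [bigWord_cons]
      refine Subgroup.mul_mem _ ?_ (ih fun s hs => hL s (List.mem_cons_of_mem _ hs))
      rw [mk_conjWord]
      have hr : FreeGroup.mk t.1 ∈ Subgroup.normalClosure (FreeGroup.mk '' R) :=
        Subgroup.subset_normalClosure ⟨t.1, hL t (List.mem_cons_self), rfl⟩
      have hb : (bif t.2.2 then FreeGroup.mk t.1 else (FreeGroup.mk t.1)⁻¹) ∈
          Subgroup.normalClosure (FreeGroup.mk '' R) := by
        cases t.2.2
        · exact Subgroup.inv_mem _ hr
        · exact hr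
      exact Subgroup.normalClosure_normal.conj_mem _ hb _

lemma mk_eq_mk_iff_reduce {u v : Wd} : FreeGroup.mk u = FreeGroup.mk v ↔
    FreeGroup.reduce u = FreeGroup.reduce v := by
  constructor
  · intro h
    have := congrArg FreeGroup.toWord h
    simpa [FreeGroup.toWord_mk] using this
  · exact FreeGroup.reduce.exact

private def redStep (a : ℕ × Bool) (l : Wd) : Wd :=
  List.casesOn l [a]
    fun b t => bif (decide (a.1 = b.1) && decide (a.2 = !b.2)) then t else a :: b :: t

lemma redStep_eq (a : ℕ × Bool) (l : Wd) :
    redStep a l = List.casesOn l [a] fun b t =>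
      if a.1 = b.1 ∧ a.2 = !b.2 then t else a :: b :: t := by
  cases l with
  | nil => rfl
  | cons b t =>
    by_cases h1 : a.1 = b.1 <;> by_cases h2 : a.2 = !b.2 <;>
      simp [redStep, Bool.cond_eq_ite, h1, h2]

lemma reduce_eq_foldr (L : Wd) : FreeGroup.reduce L = L.foldr redStep [] := by
  induction L with
  | nil => rfl
  | cons x L ih => rw [FreeGroup.reduce.cons, List.foldr_cons, ih, redStep_eq]

lemma primrec_redStep : Primrec₂ redStep := by
  have hc : Primrec fun x : ((ℕ × Bool) × Wd) × ((ℕ × Bool) × Wd) =>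
      (decide (x.1.1.1 = x.2.1.1) && decide (x.1.1.2 = !x.2.1.2)) :=
    (Primrec.dom_bool₂ (· && ·)).comp
      (Primrec.eq.decide.comp (Primrec.fst.comp (Primrec.fst.comp Primrec.fst))
        (Primrec.fst.comp (Primrec.fst.comp Primrec.snd)))
      (Primrec.eq.decide.comp (Primrec.snd.comp (Primrec.fst.comp Primrec.fst))
        (Primrec.not.comp (Primrec.snd.comp (Primrec.fst.comp Primrec.snd))))
  have ht : Primrec fun x : ((ℕ × Bool) × Wd) × ((ℕ × Bool) × Wd) => x.2.2 :=
    Primrec.snd.comp Primrec.snd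
  have he : Primrec fun x : ((ℕ × Bool) × Wd) × ((ℕ × Bool) × Wd) => x.1.1 :: x.2.1 :: x.2.2 :=
    Primrec.list_cons.comp (Primrec.fst.comp Primrec.fst)
      (Primrec.list_cons.comp (Primrec.fst.comp Primrec.snd) (Primrec.snd.comp Primrec.snd))
  have hh : Primrec₂ (fun (p : (ℕ × Bool) × Wd) (q : (ℕ × Bool) × Wd) =>
      bif (decide (p.1.1 = q.1.1) && decide (p.1.2 = !q.1.2)) then q.2 else p.1 :: q.1 :: q.2) :=
    (Primrec.cond hc ht he).to₂
  have h := Primrec.list_casesOn (f := fun p : (ℕ × Bool) × Wd => p.2)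
    (g := fun p => [p.1]) Primrec.snd
    (Primrec.list_cons.comp Primrec.fst (Primrec.const [])) hh
  exact h.to₂.of_eq fun a l => by cases l <;> rfl

lemma primrec_reduce : Primrec (FreeGroup.reduce : Wd → Wd) := by
  have : Primrec fun L : Wd => L.foldr redStep [] :=
    Primrec.list_foldr Primrec.id (Primrec.const []) <|
      (primrec_redStep.comp (Primrec.fst.comp Primrec.snd) (Primrec.snd.comp Primrec.snd)).to₂
  exact this.of_eq fun L => (reduce_eq_foldr L).symm

lemma primrec_invRev : Primrec (FreeGroup.invRev : Wd → Wd) :=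
  Primrec.list_reverse.comp <| Primrec.list_map Primrec.id <|
    (Primrec.pair (Primrec.fst.comp Primrec.snd)
      (Primrec.not.comp (Primrec.snd.comp Primrec.snd)))

lemma primrec_list_all {α β : Type*} [Primcodable α] [Primcodable β] {f : α → List β}
    {g : α → β → Bool} (hf : Primrec f) (hg : Primrec₂ g) : Primrec fun a => (f a).all (g a) := by
  have h : Primrec fun a => (f a).foldr (fun x b => g a x && b) true :=
    Primrec.list_foldr hf (Primrec.const true) <|
      ((Primrec.dom_bool₂ (· && ·)).comp (hg.comp Primrec.fst (Primrec.fst.comp Primrec.snd))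
        (Primrec.snd.comp Primrec.snd)).to₂
  refine h.of_eq fun a => ?_
  induction f a with
  | nil => rfl
  | cons x l ih => rw [List.foldr_cons, ih, List.all_cons]

lemma primrec_replicate : Primrec₂ (fun n (w : Wd) => (List.replicate n w).flatten) := by
  have : Primrec fun p : ℕ × Wd => ((List.range p.1).map fun _ => p.2).flatten :=
    Primrec.list_flatten.comp <| Primrec.list_map (Primrec.list_range.comp Primrec.fst)
      (Primrec.snd.comp Primrec.fst).to₂
  exact this.to₂.of_eq fun n w => by rw [List.map_const', List.length_range]

lemma primrec_conjWord : Primrec conjWord := by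
  have h1 : Primrec fun t : Wd × Wd × Bool => (bif t.2.2 then t.1 else FreeGroup.invRev t.1) :=
    Primrec.cond (Primrec.snd.comp Primrec.snd) Primrec.fst (primrec_invRev.comp Primrec.fst)
  exact Primrec.list_append.comp
    (Primrec.list_append.comp (Primrec.fst.comp Primrec.snd) h1)
    (primrec_invRev.comp (Primrec.fst.comp Primrec.snd))

lemma primrec_bigWord : Primrec bigWord :=
  Primrec.list_flatten.comp <|
    Primrec.list_map Primrec.id (primrec_conjWord.comp Primrec.snd).to₂

lemma exists_uniform_stage {q : Wd → ℕ → Bool}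
    (hmono : ∀ a k l, k ≤ l → q a k = true → q a l = true)
    (L : List (Wd × Wd × Bool)) (h : ∀ t ∈ L, ∃ k, q t.1 k = true) :
    ∃ s, ∀ t ∈ L, q t.1 s = true := by
  induction L with
  | nil => exact ⟨0, by simp⟩
  | cons t L ih =>
    obtain ⟨s₁, hs₁⟩ := ih fun u hu => h u (List.mem_cons_of_mem _ hu)
    obtain ⟨s₂, hs₂⟩ := h t (List.mem_cons_self)
    refine ⟨max s₁ s₂, fun u hu => ?_⟩
    rcases List.mem_cons.1 hu with rfl | hu
    · exact hmono _ _ _ (le_max_right _ _) hs₂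
    · exact hmono _ _ _ (le_max_left _ _) (hs₁ u hu)

end Aux

theorem xTorsion_words_re (R : Set (List (ℕ × Bool))) (hR : REPredicate (· ∈ R))
    (A : Set ℕ) (hA : REPredicate (· ∈ A)) :
    REPredicate (fun w : List (ℕ × Bool) =>
      PresentedGroup.mk (FreeGroup.mk '' R) (FreeGroup.mk w) ∈
        xTorsion A (PresentedGroup (FreeGroup.mk '' R))) := by
  obtain ⟨qR, hqRp, hqRm, hqR⟩ := aux_REPred_exists hR
  obtain ⟨qA, hqAp, _hqAm, hqA⟩ := aux_REPred_exists hA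
  -- the key characterization
  have hchar : ∀ w : Wd,
      (PresentedGroup.mk (FreeGroup.mk '' R) (FreeGroup.mk w) ∈
        xTorsion A (PresentedGroup (FreeGroup.mk '' R))) ↔
      ∃ n, n ∈ A ∧ ∃ L : List (Wd × Wd × Bool), (∀ t ∈ L, t.1 ∈ R) ∧
        FreeGroup.reduce (bigWord L) = FreeGroup.reduce ((List.replicate n w).flatten) := by
    intro w
    constructor
    · rintro ⟨n, hnA, hpow⟩
      have h1 : PresentedGroup.mk (FreeGroup.mk '' R) ((FreeGroup.mk w) ^ n) = 1 := by
        rw [map_pow]; exact hpow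
      have h2 : (FreeGroup.mk w) ^ n ∈ Subgroup.normalClosure (FreeGroup.mk '' R) :=
        (QuotientGroup.eq_one_iff _).1 h1
      rw [FreeGroup.pow_mk] at h2
      obtain ⟨L, hL, hLeq⟩ := (mem_normalClosure_iff R _).1 h2
      exact ⟨n, hnA, L, hL, mk_eq_mk_iff_reduce.1 hLeq⟩
    · rintro ⟨n, hnA, L, hL, hred⟩
      refine ⟨n, hnA, ?_⟩
      have h2 : (FreeGroup.mk w) ^ n ∈ Subgroup.normalClosure (FreeGroup.mk '' R) := by
        rw [FreeGroup.pow_mk]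
        exact (mem_normalClosure_iff R _).2 ⟨L, hL, mk_eq_mk_iff_reduce.2 hred⟩
      have h1 : PresentedGroup.mk (FreeGroup.mk '' R) ((FreeGroup.mk w) ^ n) = 1 :=
        (QuotientGroup.eq_one_iff _).2 h2
      rw [map_pow] at h1
      exact h1
  -- the kernel
  set T := ℕ × List (Wd × Wd × Bool) × ℕ with hT
  let Q : Wd → ℕ → Bool := fun w k =>
    Option.casesOn (Encodable.decode (α := T) k) false fun t =>
      (qA t.1 t.2.2 && t.2.1.all fun r => qR r.1 t.2.2) &&
        decide (FreeGroup.reduce (bigWord t.2.1) =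
          FreeGroup.reduce ((List.replicate t.1 w).flatten))
  have hQp : Primrec₂ Q := by
    have ho : Primrec fun x : Wd × ℕ => (Encodable.decode x.2 : Option T) :=
      Primrec.decode.comp Primrec.snd
    have hg1 : Primrec fun z : (Wd × ℕ) × T => qA z.2.1 z.2.2.2 :=
      hqAp.comp (Primrec.fst.comp Primrec.snd)
        (Primrec.snd.comp (Primrec.snd.comp Primrec.snd))
    have hg2 : Primrec fun z : (Wd × ℕ) × T => (z.2.2.1.all fun r => qR r.1 z.2.2.2) :=
      primrec_list_all (Primrec.fst.comp (Primrec.snd.comp Primrec.snd))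
        ((hqRp.comp (Primrec.fst.comp Primrec.snd)
          (Primrec.snd.comp (Primrec.snd.comp (Primrec.snd.comp Primrec.fst)))).to₂)
    have hg3 : Primrec fun z : (Wd × ℕ) × T =>
        decide (FreeGroup.reduce (bigWord z.2.2.1) =
          FreeGroup.reduce ((List.replicate z.2.1 z.1.1).flatten)) :=
      Primrec.eq.decide.comp
        (primrec_reduce.comp (primrec_bigWord.comp
          (Primrec.fst.comp (Primrec.snd.comp Primrec.snd))))
        (primrec_reduce.comp (primrec_replicate.comp (Primrec.fst.comp Primrec.snd)
          (Primrec.fst.comp Primrec.fst)))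
    have hg : Primrec₂ fun (x : Wd × ℕ) (t : T) =>
        ((qA t.1 t.2.2 && t.2.1.all fun r => qR r.1 t.2.2) &&
          decide (FreeGroup.reduce (bigWord t.2.1) =
            FreeGroup.reduce ((List.replicate t.1 x.1).flatten))) :=
      ((Primrec.dom_bool₂ (· && ·)).comp
        ((Primrec.dom_bool₂ (· && ·)).comp hg1 hg2) hg3).to₂
    exact (Primrec.option_casesOn ho (Primrec.const false) hg).to₂
  refine aux_REPred_of_sigma Q hQp fun w => ?_
  rw [hchar w]
  constructor
  · rintro ⟨n, hnA, L, hL, hred⟩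
    obtain ⟨sA, hsA⟩ := (hqA n).1 hnA
    obtain ⟨sR, hsR⟩ := exists_uniform_stage hqRm L fun t ht => (hqR t.1).1 (hL t ht)
    refine ⟨Encodable.encode ((n, L, max sA sR) : T), ?_⟩
    have hdec : (Encodable.decode (α := T) (Encodable.encode ((n, L, max sA sR) : T))) =
        some ((n, L, max sA sR) : T) := Encodable.encodek _
    simp only [Q, hdec]
    have h1 : qA n (max sA sR) = true := _hqAm n sA (max sA sR) (le_max_left _ _) hsA
    have h2 : (L.all fun r => qR r.1 (max sA sR)) = true := by
      rw [List.all_eq_true]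
      exact fun t ht => hqRm t.1 sR (max sA sR) (le_max_right _ _) (hsR t ht)
    simp [h1, h2, hred]
  · rintro ⟨k, hk⟩
    simp only [Q] at hk
    cases hdec : (Encodable.decode (α := T) k) with
    | none => rw [hdec] at hk; simp at hk
    | some t =>
      rw [hdec] at hk
      simp only [Bool.and_eq_true, decide_eq_true_eq, List.all_eq_true] at hk
      obtain ⟨⟨h1, h2⟩, h3⟩ := hk
      exact ⟨t.1, (hqA t.1).2 ⟨t.2.2, h1⟩, t.2.1,
        fun s hs => (hqR s.1).2 ⟨t.2.2, h2 s hs⟩, h3⟩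
end

section
/- Let R ⊆ List (ℕ × Bool) be a recursively enumerable set of words, let A ⊆ ℕ be recursively enumerable, and write G := PresentedGroup (FreeGroup.mk '' R). Then for every i ∈ ℕ the set T^A_i := {w ∈ List (ℕ × Bool) | the element of G represented by w lies in tor^A_i(G)} is recursively enumerable, and the set T^A_ω := {w ∈ List (ℕ × Bool) | the element of G represented by w lies in tor^A_ω(G)} is recursively enumerable. -/
/-- A predicate on a primcodable type is recursively enumerable if it is the domain of a
partial computable function. -/
def REPred' {α : Type*} [Primcodable α] (p : α → Prop) : Prop :=
  Partrec (fun a => Part.assert (p a) (fun _ => Part.some ()))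

open Nat.Partrec (Code)
open Nat.Partrec.Code
open Encodable

namespace TorRE

abbrev Wd : Type := List (ℕ × Bool)
abbrev Ent : Type := ℕ × Wd × ℕ × Wd

/-- word power -/
def wpow (n : ℕ) (w : Wd) : Wd := Nat.rec [] (fun _ ih => w ++ ih) n

lemma mk_wpow (n : ℕ) (w : Wd) : FreeGroup.mk (wpow n w) = (FreeGroup.mk w) ^ n := by
  induction n with
  | zero => simp [wpow, FreeGroup.one_eq_mk]
  | succ n ih =>
    rw [pow_succ', ← ih]
    show FreeGroup.mk (w ++ wpow n w) = _
    rw [← FreeGroup.mul_mk]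

lemma mk_invRev (w : Wd) : FreeGroup.mk (FreeGroup.invRev w) = (FreeGroup.mk w)⁻¹ :=
  (FreeGroup.inv_mk).symm

abbrev rd : Wd → Wd := FreeGroup.reduce

lemma rd_eq_iff {u v : Wd} : rd u = rd v ↔ FreeGroup.mk u = FreeGroup.mk v :=
  ⟨FreeGroup.reduce.exact, FreeGroup.reduce.sound⟩

lemma rd_nil_iff {u : Wd} : rd u = [] ↔ FreeGroup.mk u = 1 := by
  rw [FreeGroup.one_eq_mk, ← rd_eq_iff]; rfl

-- primrec facts
lemma primrec_invRev : Primrec (FreeGroup.invRev : Wd → Wd) := by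
  unfold FreeGroup.invRev
  exact Primrec.list_reverse.comp
    (Primrec.list_map .id ((Primrec.pair (Primrec.fst.comp .snd)
      (Primrec.not.comp (Primrec.snd.comp .snd)))))

lemma primrec_wpow : Primrec₂ wpow :=
  Primrec.nat_rec' Primrec.fst (Primrec.const [])
    ((Primrec.list_append.comp (Primrec.snd.comp .fst) (Primrec.snd.comp .snd)).to₂)

def rdStep (x : ℕ × Bool) (ih : Wd) : Wd :=
  List.casesOn ih [x] fun y ys => if x.1 = y.1 ∧ x.2 = !y.2 then ys else x :: y :: ys

lemma primrec_rd : Primrec rd := by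
  have hstep : Primrec fun a : Wd × ((ℕ × Bool) × Wd) => rdStep a.2.1 a.2.2 := by
    have hb : Primrec fun a : Wd × ((ℕ × Bool) × Wd) => a.2.1 :=
      Primrec.fst.comp .snd
    have hih : Primrec fun a : Wd × ((ℕ × Bool) × Wd) => a.2.2 :=
      Primrec.snd.comp .snd
    exact Primrec.list_casesOn hih (Primrec.list_cons.comp hb (Primrec.const []))
      (Primrec.to₂ (by
        have hx : Primrec fun q : (Wd × ((ℕ × Bool) × Wd)) × ((ℕ × Bool) × Wd) =>
            q.1.2.1 := Primrec.fst.comp (Primrec.snd.comp .fst)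
        have hy : Primrec fun q : (Wd × ((ℕ × Bool) × Wd)) × ((ℕ × Bool) × Wd) =>
            q.2.1 := Primrec.fst.comp .snd
        have hys : Primrec fun q : (Wd × ((ℕ × Bool) × Wd)) × ((ℕ × Bool) × Wd) =>
            q.2.2 := Primrec.snd.comp .snd
        exact Primrec.ite
          (PrimrecPred.and
            (Primrec.eq.comp (Primrec.fst.comp hx) (Primrec.fst.comp hy))
            (Primrec.eq.comp (Primrec.snd.comp hx) (Primrec.not.comp (Primrec.snd.comp hy))))
          hys
          (Primrec.list_cons.comp hx (Primrec.list_cons.comp hy hys))))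
  have h := Primrec.list_foldr (f := @id Wd) (g := fun _ => ([] : Wd))
    (h := fun _ p => rdStep p.1 p.2) Primrec.id (Primrec.const []) hstep.to₂
  exact h.of_eq fun L => by
    induction L with
    | nil => rfl
    | cons x xs ih =>
      simp only [id] at ih ⊢
      rw [List.foldr_cons, ih]
      show rdStep x (rd xs) = FreeGroup.reduce (x :: xs)
      rw [FreeGroup.reduce.cons]
      rfl


theorem primrec_bex {α β : Type*} [Primcodable α] [Primcodable β] {f : α → List β}
    {Q : α → β → Prop} [∀ a b, Decidable (Q a b)] (hf : Primrec f) (hQ : PrimrecRel Q) :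
    PrimrecPred fun a => ∃ b ∈ f a, Q a b := by
  have h : Primrec fun a => (f a).foldr (fun b r => decide (Q a b) || r) false :=
    Primrec.list_foldr hf (Primrec.const false) <| Primrec.to₂ <|
      Primrec.or.comp (hQ.comp .fst (Primrec.fst.comp .snd)).decide (Primrec.snd.comp .snd)
  exact ⟨inferInstance, h.of_eq fun a => by
    have : ∀ l : List β, List.foldr (fun b r => decide (Q a b) || r) false l
        = decide (∃ b ∈ l, Q a b) := by
      intro l
      induction l with
      | nil => simp
      | cons b l ih => simp [ih, List.exists_mem_cons_iff]
    exact this (f a)⟩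

theorem re_exists_code {α : Type*} [Primcodable α] {p : α → Prop} (hp : REPred' p) :
    ∃ c : Code, ∀ a, p a ↔ ∃ k, (evaln k c (encode a)).isSome := by
  obtain ⟨c, hc⟩ := exists_code.1 hp
  refine ⟨c, fun a => ?_⟩
  have hdom : (Part.bind (decode (α := α) (encode a))
      fun a' => ((Part.assert (p a') fun _ => Part.some ()).map encode)).Dom ↔ p a := by
    simp [encodek, Part.assert]
  have : eval c (encode a) = Part.bind (decode (α := α) (encode a))
      fun a' => ((Part.assert (p a') fun _ => Part.some ()).map encode) :=
    congrFun hc (encode a)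
  rw [← hdom, ← this]
  constructor
  · intro h
    obtain ⟨x, hx⟩ := Part.dom_iff_mem.1 h
    obtain ⟨k, hk⟩ := evaln_complete.1 hx
    exact ⟨k, by rw [Option.isSome_iff_exists]; exact ⟨x, hk⟩⟩
  · rintro ⟨k, hk⟩
    obtain ⟨x, hx⟩ := Option.isSome_iff_exists.1 hk
    exact Part.dom_iff_mem.2 ⟨x, evaln_complete.2 ⟨k, hx⟩⟩

theorem re_of_exists {α : Type*} [Primcodable α] {p : α → Prop} {f : α → ℕ → Bool}
    (hf : Primrec₂ f) (h : ∀ a, p a ↔ ∃ n, f a n = true) : REPred' p := by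
  have h1 : Partrec fun a => (Nat.rfind fun n => Part.some (f a n)).map fun _ => () :=
    (Partrec.rfind hf.to_comp.partrec₂).map ((Computable.const ()).comp Computable.fst).to₂
  apply h1.of_eq
  intro a
  apply Part.ext
  intro u
  cases u
  simp only [Part.mem_map_iff, Part.mem_assert_iff]
  constructor
  · rintro ⟨n, hn, -⟩
    have hs := Nat.rfind_spec hn
    rw [Part.mem_some_iff] at hs
    exact ⟨(h a).2 ⟨n, hs.symm⟩, Part.mem_some _⟩
  · rintro ⟨hpa, -⟩
    obtain ⟨n, hfn⟩ := (h a).1 hpa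
    have hdom : (Nat.rfind fun n => Part.some (f a n)).Dom :=
      Nat.rfind_dom.2 ⟨n, by simpa using hfn, fun _ => trivial⟩
    exact ⟨_, Part.get_mem hdom, trivial⟩


def ValidP (cR cA : Code) (L : List Ent) (e : Ent) : Prop :=
  rd e.2.1 = [] ∨
  (∃ x ∈ L, x.1 ≤ e.1 ∧ rd x.2.1 = rd e.2.1) ∨
  (∃ x ∈ L, x.1 = e.1 ∧ ∃ y ∈ L, y.1 = e.1 ∧ rd (x.2.1 ++ y.2.1) = rd e.2.1) ∨
  (∃ x ∈ L, x.1 = e.1 ∧ rd (FreeGroup.invRev x.2.1) = rd e.2.1) ∨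
  (∃ x ∈ L, x.1 = e.1 ∧ rd (e.2.2.2 ++ x.2.1 ++ FreeGroup.invRev e.2.2.2) = rd e.2.1) ∨
  (evaln e.2.2.1 cR (encode e.2.1)).isSome = true ∨
  (∃ x ∈ L, x.1 + 1 = e.1 ∧ (evaln e.2.2.1.unpair.2 cA e.2.2.1.unpair.1).isSome = true ∧
    rd (wpow e.2.2.1.unpair.1 e.2.1) = rd x.2.1)

instance (cR cA : Code) (L : List Ent) (e : Ent) : Decidable (ValidP cR cA L e) := by
  unfold ValidP; infer_instance

def chk (cR cA : Code) : List Ent → Bool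
  | [] => true
  | e :: L => decide (ValidP cR cA L e) && chk cR cA L

lemma primrec_validP (cR cA : Code) :
    PrimrecPred fun a : List Ent × Ent => ValidP cR cA a.1 a.2 := by
  have hL : Primrec fun a : List Ent × Ent => a.1 := Primrec.fst
  have hlvl : Primrec fun a : List Ent × Ent => a.2.1 := Primrec.fst.comp .snd
  have hwrd : Primrec fun a : List Ent × Ent => a.2.2.1 :=
    Primrec.fst.comp (Primrec.snd.comp .snd)
  have haux : Primrec fun a : List Ent × Ent => a.2.2.2.1 :=
    Primrec.fst.comp (Primrec.snd.comp (Primrec.snd.comp .snd))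
  have hcnj : Primrec fun a : List Ent × Ent => a.2.2.2.2 :=
    Primrec.snd.comp (Primrec.snd.comp (Primrec.snd.comp .snd))
  -- projections for pairs (a, x) with x : Ent
  have pxl : Primrec fun p : (List Ent × Ent) × Ent => p.2.1 := Primrec.fst.comp .snd
  have pxw : Primrec fun p : (List Ent × Ent) × Ent => p.2.2.1 :=
    Primrec.fst.comp (Primrec.snd.comp .snd)
  have hev : ∀ (c : Code), Primrec₂ fun (k n : ℕ) => (evaln k c n).isSome :=
    fun c => (Primrec.option_isSome.comp (primrec_evaln.comp
      (Primrec.pair (Primrec.pair Primrec.fst (Primrec.const c)) Primrec.snd))).to₂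
  apply PrimrecPred.or
  · exact PrimrecRel.comp Primrec.eq (primrec_rd.comp hwrd) (Primrec.const [])
  apply PrimrecPred.or
  · exact primrec_bex hL <| PrimrecPred.and
      (PrimrecRel.comp Primrec.nat_le pxl (hlvl.comp .fst))
      (PrimrecRel.comp Primrec.eq (primrec_rd.comp pxw) (primrec_rd.comp (hwrd.comp .fst)))
  apply PrimrecPred.or
  · apply primrec_bex hL
    apply PrimrecPred.and (PrimrecRel.comp Primrec.eq pxl (hlvl.comp .fst))
    apply primrec_bex (hL.comp .fst)
    apply PrimrecPred.and
      (PrimrecRel.comp Primrec.eq (Primrec.fst.comp .snd) (hlvl.comp (Primrec.fst.comp .fst)))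
    exact PrimrecRel.comp Primrec.eq
      (primrec_rd.comp (Primrec.list_append.comp (pxw.comp .fst)
        (Primrec.fst.comp (Primrec.snd.comp .snd))))
      (primrec_rd.comp (hwrd.comp (Primrec.fst.comp .fst)))
  apply PrimrecPred.or
  · exact primrec_bex hL <| PrimrecPred.and (PrimrecRel.comp Primrec.eq pxl (hlvl.comp .fst))
      (PrimrecRel.comp Primrec.eq (primrec_rd.comp (primrec_invRev.comp pxw))
        (primrec_rd.comp (hwrd.comp .fst)))
  apply PrimrecPred.or
  · exact primrec_bex hL <| PrimrecPred.and (PrimrecRel.comp Primrec.eq pxl (hlvl.comp .fst))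
      (PrimrecRel.comp Primrec.eq
        (primrec_rd.comp (Primrec.list_append.comp
          (Primrec.list_append.comp (hcnj.comp .fst) pxw)
          (primrec_invRev.comp (hcnj.comp .fst))))
        (primrec_rd.comp (hwrd.comp .fst)))
  apply PrimrecPred.or
  · exact PrimrecRel.comp Primrec.eq
      ((hev cR).comp haux (Primrec.encode.comp hwrd)) (Primrec.const true)
  · apply primrec_bex hL
    apply PrimrecPred.and
      (PrimrecRel.comp Primrec.eq (Primrec.succ.comp pxl) (hlvl.comp .fst))
    apply PrimrecPred.and
    · exact PrimrecRel.comp Primrec.eq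
        ((hev cA).comp (Primrec.snd.comp (Primrec.unpair.comp (haux.comp .fst)))
          (Primrec.fst.comp (Primrec.unpair.comp (haux.comp .fst))))
        (Primrec.const true)
    · exact PrimrecRel.comp Primrec.eq
        (primrec_rd.comp (primrec_wpow.comp
          (Primrec.fst.comp (Primrec.unpair.comp (haux.comp .fst)))
          (hwrd.comp .fst)))
        (primrec_rd.comp pxw)

lemma primrec_chk (cR cA : Code) : Primrec (chk cR cA) := by
  have h := Primrec.list_rec (f := @id (List Ent)) (g := fun _ => true)
    (h := fun _ p => decide (ValidP cR cA p.2.1 p.1) && p.2.2) Primrec.id (Primrec.const true)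
    (Primrec.to₂ (Primrec.and.comp
      ((primrec_validP cR cA).comp (Primrec.pair
        (Primrec.fst.comp (Primrec.snd.comp .snd)) (Primrec.fst.comp .snd))).decide
      (Primrec.snd.comp (Primrec.snd.comp .snd))))
  have hs : ∀ L : List Ent,
      @List.rec Ent (fun _ => Bool) true
        (fun e l IH => decide (ValidP cR cA l e) && IH) L = chk cR cA L := by
    intro L
    induction L with
    | nil => rfl
    | cons e l ih => exact congrArg (fun b => decide (ValidP cR cA l e) && b) ih
  exact h.of_eq fun L => hs L

def FB (cR cA : Code) (q : ℕ × Wd) (m : ℕ) : Bool :=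
  ((decode (α := List Ent) m).map fun L =>
    chk cR cA L && decide (∃ e ∈ L, e.1 = q.1 ∧ rd e.2.1 = rd q.2)).getD false

lemma primrec_FB (cR cA : Code) : Primrec₂ (FB cR cA) := by
  apply Primrec.to₂ (f := fun p : (ℕ × Wd) × ℕ => FB cR cA p.1 p.2)
  unfold FB
  apply Primrec.option_getD.comp _ (Primrec.const false)
  apply Primrec.option_map ((Primrec.decode (α := List Ent)).comp .snd)
  refine Primrec.to₂ (f := fun p : (((ℕ × Wd) × ℕ)) × List Ent =>
    chk cR cA p.2 && decide (∃ e ∈ p.2, e.1 = p.1.1.1 ∧ rd e.2.1 = rd p.1.1.2)) ?_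
  -- p : ((ℕ × Wd) × ℕ) × List Ent
  apply Primrec.and.comp ((primrec_chk cR cA).comp .snd)
  have := primrec_bex (α := ((ℕ × Wd) × ℕ) × List Ent)
    (f := fun p => p.2)
    (Q := fun p e => e.1 = p.1.1.1 ∧ rd e.2.1 = rd p.1.1.2) Primrec.snd
    (PrimrecPred.and
      (PrimrecRel.comp Primrec.eq (Primrec.fst.comp .snd)
        (Primrec.fst.comp (Primrec.fst.comp (Primrec.fst.comp .fst))))
      (PrimrecRel.comp Primrec.eq (primrec_rd.comp (Primrec.fst.comp (Primrec.snd.comp .snd)))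
        (primrec_rd.comp (Primrec.snd.comp (Primrec.fst.comp (Primrec.fst.comp .fst))))))
  exact this.decide

lemma FB_iff (cR cA : Code) (i : ℕ) (w : Wd) :
    (∃ m, FB cR cA (i, w) m = true) ↔
      ∃ L, chk cR cA L = true ∧ ∃ e ∈ L, e.1 = i ∧ FreeGroup.mk e.2.1 = FreeGroup.mk w := by
  constructor
  · rintro ⟨m, hm⟩
    unfold FB at hm
    generalize hd : (decode (α := List Ent) m) = d at hm
    rcases d with _ | L
    · simp at hm
    · rw [Option.map_some, Option.getD_some, Bool.and_eq_true, decide_eq_true_eq] at hm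
      obtain ⟨h1, e, he, h2, h3⟩ := hm
      exact ⟨L, h1, e, he, h2, FreeGroup.reduce.exact h3⟩
  · rintro ⟨L, h1, e, he, h2, h3⟩
    refine ⟨encode L, ?_⟩
    unfold FB
    rw [encodek, Option.map_some, Option.getD_some, Bool.and_eq_true, decide_eq_true_eq]
    exact ⟨h1, ⟨e, he, h2, FreeGroup.reduce.sound h3⟩⟩


section Groups

variable (R : Set Wd) (A : Set ℕ) (cR cA : Code)

local notation "G" => PresentedGroup (FreeGroup.mk '' R)
local notation "π" => PresentedGroup.mk (FreeGroup.mk '' R)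

lemma pi_eq_one_iff (x : FreeGroup ℕ) :
    π x = 1 ↔ x ∈ Subgroup.normalClosure (FreeGroup.mk '' R) :=
  QuotientGroup.eq_one_iff x

variable {R A cR cA}
variable (hRc : ∀ w : Wd, w ∈ R ↔ ∃ k, (evaln k cR (encode w)).isSome = true)
variable (hAc : ∀ n : ℕ, n ∈ A ↔ ∃ k, (evaln k cA n).isSome = true)

include hRc hAc in
lemma chk_sound : ∀ L : List Ent, chk cR cA L = true →
    ∀ e ∈ L, π (FreeGroup.mk e.2.1) ∈ torX A G e.1 := by
  intro L
  induction L with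
  | nil => intro _ e he; cases he
  | cons e0 L ih =>
    intro h e he
    rw [chk, Bool.and_eq_true, decide_eq_true_eq] at h
    obtain ⟨hv, hL⟩ := h
    rw [List.mem_cons] at he
    rcases he with he | he
    swap
    · exact ih hL e he
    subst he
    rcases hv with h | ⟨x, hx, hle, h⟩ | ⟨x, hx, hxl, y, hy, hyl, h⟩ | ⟨x, hx, hxl, h⟩ |
      ⟨x, hx, hxl, h⟩ | h | ⟨x, hx, hxl, hn, h⟩
    · rw [rd_nil_iff] at h
      rw [h, map_one]
      exact Subgroup.one_mem _
    · rw [rd_eq_iff] at h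
      rw [← h]
      exact torX_mono A G hle (ih hL x hx)
    · rw [rd_eq_iff] at h
      rw [← h, ← FreeGroup.mul_mk, map_mul]
      exact Subgroup.mul_mem _ (hxl ▸ ih hL x hx) (hyl ▸ ih hL y hy)
    · rw [rd_eq_iff] at h
      rw [← h, mk_invRev, map_inv]
      exact Subgroup.inv_mem _ (hxl ▸ ih hL x hx)
    · rw [rd_eq_iff] at h
      rw [← h, ← FreeGroup.mul_mk, ← FreeGroup.mul_mk, mk_invRev, map_mul, map_mul, map_inv]
      exact (torX_normal A G e.1).conj_mem _ (hxl ▸ ih hL x hx) _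
    · have hR : e.2.1 ∈ R := (hRc e.2.1).2 ⟨e.2.2.1, h⟩
      have : π (FreeGroup.mk e.2.1) = 1 := (pi_eq_one_iff R _).2
        (Subgroup.subset_normalClosure (Set.mem_image_of_mem _ hR))
      rw [this]
      exact Subgroup.one_mem _
    · have hA : e.2.2.1.unpair.1 ∈ A := (hAc _).2 ⟨_, hn⟩
      rw [rd_eq_iff, mk_wpow] at h
      have hmem : (π (FreeGroup.mk e.2.1)) ^ e.2.2.1.unpair.1 ∈ torX A G x.1 := by
        rw [← map_pow, h]
        exact ih hL x hx
      have : π (FreeGroup.mk e.2.1) ∈ torStep A (torX A G x.1) :=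
        Subgroup.subset_normalClosure ⟨_, hA, hmem⟩
      rw [← hxl]
      exact this

end Groups

section DerPart

variable (cR cA : Code)

lemma validP_mono {L L' : List Ent} {e : Ent} (hsub : ∀ x ∈ L, x ∈ L') :
    ValidP cR cA L e → ValidP cR cA L' e := by
  rintro (h | ⟨x, hx, h⟩ | ⟨x, hx, h1, y, hy, h2⟩ | ⟨x, hx, h⟩ | ⟨x, hx, h⟩ | h | ⟨x, hx, h⟩)
  · exact Or.inl h
  · exact Or.inr <| Or.inl ⟨x, hsub x hx, h⟩
  · exact Or.inr <| Or.inr <| Or.inl ⟨x, hsub x hx, h1, y, hsub y hy, h2⟩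
  · exact Or.inr <| Or.inr <| Or.inr <| Or.inl ⟨x, hsub x hx, h⟩
  · exact Or.inr <| Or.inr <| Or.inr <| Or.inr <| Or.inl ⟨x, hsub x hx, h⟩
  · exact Or.inr <| Or.inr <| Or.inr <| Or.inr <| Or.inr <| Or.inl h
  · exact Or.inr <| Or.inr <| Or.inr <| Or.inr <| Or.inr <| Or.inr ⟨x, hsub x hx, h⟩

lemma chk_append {L₁ L₂ : List Ent} (h1 : chk cR cA L₁ = true) (h2 : chk cR cA L₂ = true) :
    chk cR cA (L₁ ++ L₂) = true := by
  induction L₁ with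
  | nil => simpa using h2
  | cons e L ih =>
    rw [chk, Bool.and_eq_true, decide_eq_true_eq] at h1
    rw [List.cons_append, chk, Bool.and_eq_true, decide_eq_true_eq]
    exact ⟨validP_mono cR cA (fun x hx => List.mem_append_left _ hx) h1.1, ih h1.2⟩

lemma chk_cons {L : List Ent} {e : Ent} (hv : ValidP cR cA L e) (h : chk cR cA L = true) :
    chk cR cA (e :: L) = true := by
  rw [chk, Bool.and_eq_true, decide_eq_true_eq]
  exact ⟨hv, h⟩

/-- Derivability of `g` at level `i`. -/
def Der (i : ℕ) (g : FreeGroup ℕ) : Prop :=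
  ∃ L, chk cR cA L = true ∧ ∃ e ∈ L, e.1 = i ∧ FreeGroup.mk e.2.1 = g

variable {cR cA}

lemma der_one (i : ℕ) : Der cR cA i 1 := by
  refine ⟨[(i, [], 0, [])], ?_, (i, [], 0, []), List.mem_singleton_self _, rfl, ?_⟩
  · exact chk_cons _ _ (Or.inl rfl) rfl
  · exact (FreeGroup.one_eq_mk).symm

lemma der_mul {i : ℕ} {g₁ g₂ : FreeGroup ℕ} (h1 : Der cR cA i g₁) (h2 : Der cR cA i g₂) :
    Der cR cA i (g₁ * g₂) := by
  obtain ⟨L₁, hc1, e₁, he₁, hl₁, hm₁⟩ := h1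
  obtain ⟨L₂, hc2, e₂, he₂, hl₂, hm₂⟩ := h2
  refine ⟨(i, e₁.2.1 ++ e₂.2.1, 0, []) :: (L₁ ++ L₂), ?_, _, List.mem_cons_self, rfl, ?_⟩
  · refine chk_cons _ _ ?_ (chk_append _ _ hc1 hc2)
    exact Or.inr <| Or.inr <| Or.inl
      ⟨e₁, List.mem_append_left _ he₁, hl₁, e₂, List.mem_append_right _ he₂, hl₂, rfl⟩
  · rw [← FreeGroup.mul_mk, hm₁, hm₂]

lemma der_inv {i : ℕ} {g : FreeGroup ℕ} (h : Der cR cA i g) : Der cR cA i g⁻¹ := by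
  obtain ⟨L, hc, e, he, hl, hm⟩ := h
  refine ⟨(i, FreeGroup.invRev e.2.1, 0, []) :: L, ?_, _, List.mem_cons_self, rfl, ?_⟩
  · exact chk_cons _ _ (Or.inr <| Or.inr <| Or.inr <| Or.inl ⟨e, he, hl, rfl⟩) hc
  · rw [mk_invRev, hm]

lemma der_conj {i : ℕ} {g : FreeGroup ℕ} (h : Der cR cA i g) (c : FreeGroup ℕ) :
    Der cR cA i (c * g * c⁻¹) := by
  obtain ⟨L, hc, e, he, hl, hm⟩ := h
  refine ⟨(i, c.toWord ++ e.2.1 ++ FreeGroup.invRev c.toWord, 0, c.toWord) :: L, ?_,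
    _, List.mem_cons_self, rfl, ?_⟩
  · exact chk_cons _ _ (Or.inr <| Or.inr <| Or.inr <| Or.inr <| Or.inl ⟨e, he, hl, rfl⟩) hc
  · rw [← FreeGroup.mul_mk, ← FreeGroup.mul_mk, mk_invRev, FreeGroup.mk_toWord, hm]

lemma der_mono {i j : ℕ} (hij : i ≤ j) {g : FreeGroup ℕ} (h : Der cR cA i g) :
    Der cR cA j g := by
  obtain ⟨L, hc, e, he, hl, hm⟩ := h
  refine ⟨(j, e.2.1, 0, []) :: L, ?_, _, List.mem_cons_self, rfl, hm⟩
  exact chk_cons _ _ (Or.inr <| Or.inl ⟨e, he, hl ▸ hij, rfl⟩) hc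

lemma der_rel {R : Set Wd} (hRc : ∀ w : Wd, w ∈ R ↔ ∃ k, (evaln k cR (encode w)).isSome = true)
    {w : Wd} (hw : w ∈ R) (i : ℕ) : Der cR cA i (FreeGroup.mk w) := by
  obtain ⟨k, hk⟩ := (hRc w).1 hw
  refine ⟨[(i, w, k, [])], ?_, _, List.mem_singleton_self _, rfl, rfl⟩
  exact chk_cons _ _ (Or.inr <| Or.inr <| Or.inr <| Or.inr <| Or.inr <| Or.inl hk) rfl

lemma der_tor {A : Set ℕ} (hAc : ∀ n : ℕ, n ∈ A ↔ ∃ k, (evaln k cA n).isSome = true)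
    {i n : ℕ} (hn : n ∈ A) {g : FreeGroup ℕ} (h : Der cR cA i (g ^ n)) :
    Der cR cA (i + 1) g := by
  obtain ⟨L, hc, e, he, hl, hm⟩ := h
  obtain ⟨k, hk⟩ := (hAc n).1 hn
  refine ⟨(i + 1, g.toWord, Nat.pair n k, []) :: L, ?_, _, List.mem_cons_self, rfl,
    FreeGroup.mk_toWord⟩
  apply chk_cons _ _ _ hc
  refine Or.inr <| Or.inr <| Or.inr <| Or.inr <| Or.inr <| Or.inr ⟨e, he, ?_, ?_, ?_⟩
  · rw [hl]
  · simpa using hk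
  · rw [rd_eq_iff, mk_wpow, FreeGroup.mk_toWord, hm]
    simp

variable (cR cA) in
/-- Derivable elements at level `i`, as a subgroup. -/
def DerSub (i : ℕ) : Subgroup (FreeGroup ℕ) where
  carrier := {g | Der cR cA i g}
  one_mem' := der_one i
  mul_mem' := fun h1 h2 => der_mul h1 h2
  inv_mem' := fun h => der_inv h

instance derSub_normal (i : ℕ) : (DerSub cR cA i).Normal := by
  constructor
  intro g hg c
  have := der_conj hg c
  exact this

lemma derSub_mono {i j : ℕ} (hij : i ≤ j) : DerSub cR cA i ≤ DerSub cR cA j :=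
  fun _ h => der_mono hij h

end DerPart

section Complete

variable {R : Set Wd} {A : Set ℕ} {cR cA : Code}

local notation "G" => PresentedGroup (FreeGroup.mk '' R)
local notation "π" => PresentedGroup.mk (FreeGroup.mk '' R)

variable (hRc : ∀ w : Wd, w ∈ R ↔ ∃ k, (evaln k cR (encode w)).isSome = true)
variable (hAc : ∀ n : ℕ, n ∈ A ↔ ∃ k, (evaln k cA n).isSome = true)

include hRc in
lemma ker_le_derSub (i : ℕ) : (π : FreeGroup ℕ →* G).ker ≤ DerSub cR cA i := by
  have hker : (π : FreeGroup ℕ →* G).ker = Subgroup.normalClosure (FreeGroup.mk '' R) :=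
    Subgroup.ext fun x => QuotientGroup.eq_one_iff x
  rw [hker]
  apply Subgroup.normalClosure_le_normal
  rintro g ⟨w, hw, rfl⟩
  exact der_rel hRc hw i

include hRc hAc in
lemma comap_torX_le_derSub : ∀ i : ℕ,
    Subgroup.comap (π : FreeGroup ℕ →* G) (torX A G i) ≤ DerSub cR cA i := by
  intro i
  induction i with
  | zero =>
    intro g hg
    have : g ∈ (π : FreeGroup ℕ →* G).ker := by
      simpa [torX, MonoidHom.mem_ker, Subgroup.mem_comap] using hg
    exact ker_le_derSub hRc 0 this
  | succ i ih =>
    -- comap π (torStep A (torX A G i)) = normalClosure (π ⁻¹' S) ⊔ ker π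
    have hsurj : Function.Surjective (π : FreeGroup ℕ →* G) :=
      PresentedGroup.mk_surjective _
    set S : Set G := {g : G | ∃ n ∈ A, g ^ n ∈ torX A G i} with hS
    have himg : (π : FreeGroup ℕ →* G) '' ((π : FreeGroup ℕ →* G) ⁻¹' S) = S :=
      Set.image_preimage_eq S hsurj
    have hmap : Subgroup.map (π : FreeGroup ℕ →* G)
        (Subgroup.normalClosure ((π : FreeGroup ℕ →* G) ⁻¹' S)) = Subgroup.normalClosure S := by
      rw [Subgroup.map_normalClosure _ _ hsurj, himg]
    have hcomap : Subgroup.comap (π : FreeGroup ℕ →* G) (torX A G (i + 1)) =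
        Subgroup.normalClosure ((π : FreeGroup ℕ →* G) ⁻¹' S) ⊔
          (π : FreeGroup ℕ →* G).ker := by
      have : torX A G (i + 1) = Subgroup.normalClosure S := rfl
      rw [this, ← hmap, Subgroup.comap_map_eq]
    rw [hcomap]
    apply sup_le
    · apply Subgroup.normalClosure_le_normal
      rintro g hg
      obtain ⟨n, hn, hgn⟩ : ∃ n ∈ A, (π g : G) ^ n ∈ torX A G i := hg
      have : g ^ n ∈ Subgroup.comap (π : FreeGroup ℕ →* G) (torX A G i) := by
        rw [Subgroup.mem_comap, map_pow]
        exact hgn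
      exact der_tor hAc hn (ih this)
    · exact (ker_le_derSub hRc (i + 1)).trans (le_refl _)

include hRc hAc in
theorem mem_torX_iff_der (i : ℕ) (w : Wd) :
    π (FreeGroup.mk w) ∈ torX A G i ↔ Der cR cA i (FreeGroup.mk w) := by
  constructor
  · intro h
    exact comap_torX_le_derSub hRc hAc i (Subgroup.mem_comap.2 h)
  · rintro ⟨L, hc, e, he, hl, hm⟩
    have := chk_sound hRc hAc L hc e he
    rw [hl, hm] at this
    exact this

end Complete


end TorRE

lemma TorRE.mem_torOmega_iff {G : Type*} [Group G] {A : Set ℕ} {g : G} :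
    g ∈ torOmega A G ↔ ∃ i, g ∈ torX A G i := by
  show g ∈ (⋃ n, (torX A G n : Set G)) ↔ _
  exact Set.mem_iUnion

theorem torX_words_re (R : Set (List (ℕ × Bool))) (hR : REPred' (· ∈ R))
    (A : Set ℕ) (hA : REPred' (· ∈ A)) :
    (∀ i : ℕ, REPred' (fun w : List (ℕ × Bool) =>
        PresentedGroup.mk (FreeGroup.mk '' R) (FreeGroup.mk w) ∈
          torX A (PresentedGroup (FreeGroup.mk '' R)) i)) ∧
    REPred' (fun w : List (ℕ × Bool) =>
      PresentedGroup.mk (FreeGroup.mk '' R) (FreeGroup.mk w) ∈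
        torOmega A (PresentedGroup (FreeGroup.mk '' R))) := by
  obtain ⟨cR, hRc⟩ := TorRE.re_exists_code hR
  obtain ⟨cA, hAc⟩ := TorRE.re_exists_code hA
  constructor
  · intro i
    apply TorRE.re_of_exists (f := fun w m => TorRE.FB cR cA (i, w) m)
      (((TorRE.primrec_FB cR cA).comp
        (Primrec.pair (Primrec.const i) Primrec.fst) Primrec.snd).to₂)
    intro w
    exact (TorRE.mem_torX_iff_der hRc hAc i w).trans ((TorRE.FB_iff cR cA i w).symm)
  · apply TorRE.re_of_exists
      (f := fun (w : List (ℕ × Bool)) (m : ℕ) => TorRE.FB cR cA (m.unpair.1, w) m.unpair.2)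
      (((TorRE.primrec_FB cR cA).comp
        (Primrec.pair (Primrec.fst.comp (Primrec.unpair.comp Primrec.snd)) Primrec.fst)
        (Primrec.snd.comp (Primrec.unpair.comp Primrec.snd))).to₂)
    intro w
    rw [TorRE.mem_torOmega_iff]
    constructor
    · rintro ⟨i, hi⟩
      obtain ⟨m, hm⟩ := (TorRE.FB_iff cR cA i w).2 ((TorRE.mem_torX_iff_der hRc hAc i w).1 hi)
      refine ⟨Nat.pair i m, ?_⟩
      rwa [Nat.unpair_pair]
    · rintro ⟨m, hm⟩
      exact ⟨m.unpair.1, (TorRE.mem_torX_iff_der hRc hAc _ w).2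
        ((TorRE.FB_iff cR cA _ w).1 ⟨m.unpair.2, hm⟩)⟩
end

section
/- Let A ⊆ ℕ be a set with a ∈ A for some a ≥ 2, and let W ⊆ ℕ. Consider the group G presented on generators x_i (i ∈ ℕ) with relators {x_i^a | i ∈ ℕ} ∪ {x_j | j ∈ W}, i.e. G := PresentedGroup R where R ⊆ FreeGroup ℕ is the set {(FreeGroup.of i)^a | i ∈ ℕ} ∪ {FreeGroup.of j | j ∈ W}. Then G is A-torsion-free if and only if W = ℕ. -/
theorem xTorsionFree_iff_W_univ (A : Set ℕ) (a : ℕ) (ha : a ∈ A) (ha2 : 2 ≤ a)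
    (W : Set ℕ) :
    IsXTorsionFree A (PresentedGroup
      ((Set.range fun i : ℕ => FreeGroup.of i ^ a) ∪ (FreeGroup.of '' W))) ↔
    W = Set.univ := by
  constructor
  · intro h
    by_contra hW
    obtain ⟨j, hj⟩ : ∃ j, j ∉ W := by
      rw [Set.eq_univ_iff_forall] at hW; push_neg at hW; exact hW
    haveI : Fact (1 < a) := ⟨ha2⟩
    set R := ((Set.range fun i : ℕ => FreeGroup.of i ^ a) ∪ (FreeGroup.of '' W))
      with hR
    have hrel : ∀ r ∈ R, FreeGroup.lift
        (fun i : ℕ => if i = j then Multiplicative.ofAdd (1 : ZMod a) else 1) r = 1 := by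
      rintro r (⟨i, rfl⟩ | ⟨k, hk, rfl⟩)
      · simp only [map_pow, FreeGroup.lift_apply_of]
        by_cases hij : i = j
        · rw [if_pos hij, ← ofAdd_nsmul, nsmul_eq_mul, mul_one,
            ZMod.natCast_self, ofAdd_zero]
        · simp [hij]
      · have : k ≠ j := fun e => hj (e ▸ hk)
        simp [FreeGroup.lift_apply_of, this]
    set φ := PresentedGroup.toGroup hrel
    have hxa : (PresentedGroup.of (rels := R) j) ^ a = 1 := by
      show (PresentedGroup.mk R (FreeGroup.of j)) ^ a = 1
      rw [← map_pow]
      refine (QuotientGroup.eq_one_iff _).mpr ?_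
      exact Subgroup.subset_normalClosure (Set.mem_union_left _ ⟨j, rfl⟩)
    have hmem : PresentedGroup.of (rels := R) j ∈ xTorsion A (PresentedGroup R) :=
      ⟨a, ha, hxa⟩
    rw [h] at hmem
    have h1 : φ (PresentedGroup.of (rels := R) j) = 1 := by rw [hmem]; simp
    rw [PresentedGroup.toGroup.of] at h1
    simp only [if_pos rfl] at h1
    have := congrArg Multiplicative.toAdd h1
    simp at this
  · intro hW
    subst hW
    set R := ((Set.range fun i : ℕ => FreeGroup.of i ^ a) ∪ (FreeGroup.of '' Set.univ))
      with hR
    have htriv : ∀ g : PresentedGroup R, g = 1 := by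
      intro g
      have := PresentedGroup.generated_by R ⊥ (fun i => by
        show PresentedGroup.mk R (FreeGroup.of i) ∈ ⊥
        rw [Subgroup.mem_bot]
        refine (QuotientGroup.eq_one_iff _).mpr ?_
        exact Subgroup.subset_normalClosure
          (Set.mem_union_right _ ⟨i, Set.mem_univ i, rfl⟩)) g
      rwa [Subgroup.mem_bot] at this
    ext g
    simp only [Set.mem_singleton_iff]
    constructor
    · intro _; exact htriv g
    · rintro rfl; exact ⟨a, ha, one_pow a⟩
end
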